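/- Let $a, c, B > 0$ and let $X : (0,\infty) \to [0,\infty)$ be differentiable with $X'(t) + a\, X(t)^{1+c} \leq B$ for all $t > 0$. Then for all $t > 0$, $X(t) \leq \Big(\frac{B}{a}\Big)^{\frac{1}{1+c}} + \Big(\frac{1}{c\,a}\Big)^{\frac{1}{c}}\, t^{-\frac{1}{c}}$. -/

import Mathlib

set_option maxHeartbeats 1000000

open Real Filter Set Topology

lemma rpow_superadd {x y p : ℝ} (hx : 0 ≤ x) (hy : 0 ≤ y) (hp : 1 ≤ p) :
    x ^ p + y ^ p ≤ (x + y) ^ p := by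
  have h := NNReal.add_rpow_le_rpow_add x.toNNReal y.toNNReal hp
  have := (NNReal.coe_le_coe).2 h
  rw [NNReal.coe_add, NNReal.coe_rpow, NNReal.coe_rpow, NNReal.coe_rpow, NNReal.coe_add,
    Real.coe_toNNReal x hx, Real.coe_toNNReal y hy] at this
  exact this

theorem ode_comparison_generation
    (a c B : ℝ) (ha : 0 < a) (hc : 0 < c) (hB : 0 < B)
    (X : ℝ → ℝ) (hX0 : ∀ t, 0 < t → 0 ≤ X t)
    (hdiff : ∀ t, 0 < t → DifferentiableAt ℝ X t)
    (hode : ∀ t, 0 < t → deriv X t + a * X t ^ (1 + c) ≤ B) :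
    ∀ t, 0 < t → X t ≤ (B / a) ^ (1 / (1 + c)) + (1 / (c * a)) ^ (1 / c) * t ^ (-(1 / c)) := by
  intro t ht
  set p : ℝ := -(1 / c) with hp
  set K : ℝ := (B / a) ^ (1 / (1 + c)) with hKdef
  set M : ℝ := (1 / (c * a)) ^ (1 / c) with hMdef
  have hc1 : (0 : ℝ) < 1 + c := by linarith
  have hKpos : 0 < K := Real.rpow_pos_of_pos (div_pos hB ha) _
  have hMpos : 0 < M := Real.rpow_pos_of_pos (by positivity) _
  -- a * K ^ (1+c) = B
  have hKp : a * K ^ (1 + c) = B := by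
    rw [hKdef, ← Real.rpow_mul (div_pos hB ha).le, one_div_mul_cancel hc1.ne',
      Real.rpow_one, mul_div_cancel₀ _ ha.ne']
  -- M ^ c = 1 / (c * a)
  have hMc : M ^ c = 1 / (c * a) := by
    rw [hMdef, ← Real.rpow_mul (by positivity), one_div_mul_cancel hc.ne', Real.rpow_one]
  have hpc : p * (1 + c) = p - 1 := by
    rw [hp]; field_simp; ring
  -- Key step: for every ε ∈ (0, t), X t ≤ K + (M + ε) * (t - ε) ^ p
  have key : ∀ ε ∈ Ioo (0 : ℝ) t, X t ≤ K + (M + ε) * (t - ε) ^ p := by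
    intro ε hε
    obtain ⟨hε0, hεt⟩ := hε
    set Z : ℝ → ℝ := fun s => K + (M + ε) * (s - ε) ^ p with hZdef
    have hMε : 0 < M + ε := by linarith
    -- X is continuous on [ε, t]; take its max
    have hcont : ContinuousOn X (Icc ε t) := fun s hs =>
      ((hdiff s (hε0.trans_le hs.1)).continuousAt).continuousWithinAt
    obtain ⟨sm, hsm, hsmax⟩ :=
      isCompact_Icc.exists_isMaxOn (nonempty_Icc.2 hεt.le) hcont
    set C : ℝ := X sm + 1 with hCdef
    have hCpos : 0 < C := by
      have := hX0 sm (hε0.trans_le hsm.1); linarith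
    set r : ℝ := min (t - ε) (((M + ε) / C) ^ c) with hrdef
    have hrpos : 0 < r :=
      lt_min (by linarith) (Real.rpow_pos_of_pos (by positivity) _)
    set s₀ : ℝ := ε + r with hs₀def
    have hs₀t : s₀ ≤ t := by
      have := min_le_left (t - ε) (((M + ε) / C) ^ c)
      simp only [hs₀def]; linarith [hrdef ▸ this]
    have hs₀ε : ε < s₀ := by simp only [hs₀def]; linarith
    -- initial comparison at s₀
    have hinit : X s₀ ≤ Z s₀ := by
      have h1 : X s₀ ≤ X sm := hsmax ⟨by linarith, hs₀t⟩
      have hrle : r ≤ ((M + ε) / C) ^ c := min_le_right _ _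
      have h2 : (((M + ε) / C) ^ c) ^ p ≤ r ^ p :=
        Real.rpow_le_rpow_of_nonpos hrpos hrle (by rw [hp]; simp only [neg_nonpos]; positivity)
      have h3 : (((M + ε) / C) ^ c) ^ p = C / (M + ε) := by
        rw [← Real.rpow_mul (by positivity), hp]
        have : c * -(1 / c) = -1 := by field_simp
        rw [this, Real.rpow_neg_one, inv_div]
      have h4 : C ≤ (M + ε) * r ^ p := by
        rw [h3] at h2
        calc C = (M + ε) * (C / (M + ε)) := by field_simp
          _ ≤ (M + ε) * r ^ p := by
              exact mul_le_mul_of_nonneg_left h2 hMε.le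
      have hs₀r : s₀ - ε = r := by simp [hs₀def]
      calc X s₀ ≤ X sm := h1
        _ ≤ C := by simp [hCdef]
        _ ≤ (M + ε) * r ^ p := h4
        _ ≤ Z s₀ := by simp only [hZdef, hs₀r]; linarith
    -- derivative of Z
    have hZd : ∀ x, ε < x → HasDerivAt Z ((M + ε) * (p * (x - ε) ^ (p - 1))) x := by
      intro x hx
      have h1 : HasDerivAt (fun s : ℝ => s - ε) 1 x := (hasDerivAt_id x).sub_const ε
      have h2 : HasDerivAt (fun s : ℝ => (s - ε) ^ p)
          (p * (x - ε) ^ (p - 1) * 1) x :=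
        by convert h1.rpow_const (p := p) (Or.inl (sub_pos.2 hx).ne') using 1; ring
      rw [hZdef]; exact ((h2.const_mul (M + ε)).const_add K).congr_deriv (by ring)
    -- comparison on [s₀, t]
    have hcomp : ∀ ⦃x⦄, x ∈ Icc s₀ t → X x ≤ Z x := by
      refine image_le_of_deriv_right_lt_deriv_boundary'
        (f' := deriv X) (B' := fun s => (M + ε) * (p * (s - ε) ^ (p - 1)))
        (fun s hs => ((hdiff s (by linarith [hs.1])).continuousAt).continuousWithinAt)
        (fun x hx => ((hdiff x (by linarith [hx.1])).hasDerivAt).hasDerivWithinAt)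
        hinit
        (fun x hx => (hZd x (by linarith [hx.1])).continuousAt.continuousWithinAt)
        (fun x hx => (hZd x (by linarith [hx.1])).hasDerivWithinAt)
        ?_
      intro x hx hXZ
      have hxε : ε < x := by linarith [hx.1]
      have hx0 : 0 < x := hε0.trans hxε
      have hq : 0 < (x - ε) ^ (p - 1) := Real.rpow_pos_of_pos (by linarith) _
      set q : ℝ := (x - ε) ^ (p - 1) with hqdef
      set m : ℝ := (M + ε) * (x - ε) ^ p with hmdef
      have hmpos : 0 < m := by
        exact mul_pos hMε (Real.rpow_pos_of_pos (by linarith) _)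
      -- m ^ (1+c) = (M+ε)^(1+c) * q
      have hm1c : m ^ (1 + c) = (M + ε) ^ (1 + c) * q := by
        rw [hmdef, Real.mul_rpow hMε.le (Real.rpow_pos_of_pos (by linarith) p).le,
          ← Real.rpow_mul (by linarith : (0:ℝ) ≤ x - ε), hpc, hqdef]
      -- a * (M+ε)^(1+c) > (M+ε)/c
      have hMεc : (M + ε) / c < a * (M + ε) ^ (1 + c) := by
        have h1 : (M + ε) ^ (1 + c) = (M + ε) * (M + ε) ^ c := by
          rw [Real.rpow_add hMε, Real.rpow_one]
        have h2 : M ^ c < (M + ε) ^ c :=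
          Real.rpow_lt_rpow hMpos.le (by linarith) hc
        rw [hMc] at h2
        rw [h1]
        have : (M + ε) / c = (M + ε) * (1 / (c * a)) * a := by field_simp
        rw [this]
        have := mul_lt_mul_of_pos_left h2 hMε
        nlinarith
      -- superadditivity
      have hsup : K ^ (1 + c) + m ^ (1 + c) ≤ (K + m) ^ (1 + c) :=
        rpow_superadd hKpos.le hmpos.le (by linarith)
      have hode' := hode x hx0
      have hXx : X x = K + m := hXZ
      have hder : deriv X x ≤ B - a * (K + m) ^ (1 + c) := by
        rw [← hXx]; linarith
      have hfinal : B - a * (K + m) ^ (1 + c) < (M + ε) * (p * q) := by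
        have h5 : a * (K ^ (1 + c) + m ^ (1 + c)) ≤ a * (K + m) ^ (1 + c) :=
          mul_le_mul_of_nonneg_left hsup ha.le
        have h6 : a * K ^ (1 + c) + a * ((M + ε) ^ (1 + c) * q) ≤ a * (K + m) ^ (1 + c) := by
          rw [← hm1c]; linarith
        rw [hKp] at h6
        have h7 : (M + ε) / c * q < a * (M + ε) ^ (1 + c) * q :=
          mul_lt_mul_of_pos_right hMεc hq
        have h8 : (M + ε) * (p * q) = -((M + ε) / c * q) := by
          rw [hp]; field_simp
        rw [h8]; linarith
      show deriv X x < (M + ε) * (p * q)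
      linarith
    have := hcomp ⟨hs₀t, le_refl t⟩
    simpa [hZdef] using this
  -- pass to the limit ε → 0⁺
  have hlim : Tendsto (fun ε : ℝ => K + (M + ε) * (t - ε) ^ p) (𝓝[>] 0)
      (𝓝 (K + M * t ^ p)) := by
    have hca : ContinuousAt (fun ε : ℝ => K + (M + ε) * (t - ε) ^ p) 0 := by
      apply ContinuousAt.add continuousAt_const
      apply ContinuousAt.mul (by fun_prop)
      exact (Real.continuousAt_rpow_const _ _ (Or.inl (by simpa using ht.ne'))).comp
        (by fun_prop)
    have h2 : Tendsto (fun ε : ℝ => K + (M + ε) * (t - ε) ^ p) (𝓝[>] 0)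
        (𝓝 (K + (M + 0) * (t - 0) ^ p)) := hca.continuousWithinAt
    simpa using h2
  refine ge_of_tendsto hlim ?_
  filter_upwards [Ioo_mem_nhdsGT_of_mem ⟨le_refl (0:ℝ), ht⟩] with ε hε
  exact key ε hε
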